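/- Fix an integer d ≥ 1 and real phases β_0, α_1, β_1, …, α_d, β_d. For θ ∈ ℝ let R(θ) := e^{−i(θ/2)Y} ∈ M₂(ℂ) and define the single-qubit QSP product M(θ) := e^{−iβ_0 Z} · Π_{r=1}^{d} [ R(θ)* e^{−iα_r Z} R(θ) e^{−iβ_r Z} ]. Then there exists a polynomial P ∈ ℂ[x] of degree at most 2d such that for all θ ∈ ℝ, ⟨0| M(θ) |0⟩ = P(cos(θ/2)). (The depth-d generalized echo sequence implements a degree-2d polynomial transformation of λ = cos(θ/2).) -/

import Mathlib

open Matrix Polynomial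

/-- The Pauli matrix `Y`. -/
noncomputable def pauliY : Matrix (Fin 2) (Fin 2) ℂ :=
  !![0, -Complex.I; Complex.I, 0]

/-- `e^{−i(θ/2)Y} = cos(θ/2)·I − i sin(θ/2)·Y`. -/
noncomputable def Ry (θ : ℝ) : Matrix (Fin 2) (Fin 2) ℂ :=
  (Real.cos (θ / 2) : ℂ) • (1 : Matrix (Fin 2) (Fin 2) ℂ)
    - (Complex.I * (Real.sin (θ / 2) : ℂ)) • pauliY

/-- `e^{−iαZ} = diag(e^{−iα}, e^{iα})`. -/
noncomputable def Rz (α : ℝ) : Matrix (Fin 2) (Fin 2) ℂ :=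
  !![Complex.exp (-(α : ℂ) * Complex.I), 0; 0, Complex.exp ((α : ℂ) * Complex.I)]

/-- The ordered product `term d * term (d-1) * ⋯ * term 1`
(the factor with `r = 1` rightmost, `r` increasing from right to left). -/
noncomputable def qspProd (term : ℕ → Matrix (Fin 2) (Fin 2) ℂ) :
    ℕ → Matrix (Fin 2) (Fin 2) ℂ
  | 0 => 1
  | d + 1 => term (d + 1) * qspProd term d

section Aux

open Complex

lemma Ry_eq (θ : ℝ) : Ry θ =
    !![(Real.cos (θ/2):ℂ), -(Real.sin (θ/2):ℂ); (Real.sin (θ/2):ℂ), (Real.cos (θ/2):ℂ)] := by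
  ext i j
  fin_cases i <;> fin_cases j <;>
    simp [Ry, pauliY, Matrix.one_apply, -Complex.ofReal_sin, -Complex.ofReal_cos] <;>
    ring_nf <;> simp [Complex.I_sq]

lemma Ry_conj_eq (θ : ℝ) : (Ry θ)ᴴ =
    !![(Real.cos (θ/2):ℂ), (Real.sin (θ/2):ℂ); -(Real.sin (θ/2):ℂ), (Real.cos (θ/2):ℂ)] := by
  rw [Ry_eq]
  ext i j
  fin_cases i <;> fin_cases j <;>
    simp [Matrix.conjTranspose_apply, Complex.conj_ofReal,
      -Complex.ofReal_sin, -Complex.ofReal_cos]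

lemma term_eq (θ a b : ℝ) :
    (Ry θ)ᴴ * Rz a * Ry θ * Rz b =
      !![Complex.exp (-(b:ℂ)*I) * (Complex.exp (-(a:ℂ)*I) * (Real.cos (θ/2):ℂ)^2
            + Complex.exp ((a:ℂ)*I) * (Real.sin (θ/2):ℂ)^2),
         Complex.exp ((b:ℂ)*I) * (Complex.exp ((a:ℂ)*I) - Complex.exp (-(a:ℂ)*I))
            * (Real.sin (θ/2):ℂ) * (Real.cos (θ/2):ℂ);
         Complex.exp (-(b:ℂ)*I) * (Complex.exp ((a:ℂ)*I) - Complex.exp (-(a:ℂ)*I))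
            * (Real.sin (θ/2):ℂ) * (Real.cos (θ/2):ℂ),
         Complex.exp ((b:ℂ)*I) * (Complex.exp (-(a:ℂ)*I) * (Real.sin (θ/2):ℂ)^2
            + Complex.exp ((a:ℂ)*I) * (Real.cos (θ/2):ℂ)^2)] := by
  rw [Ry_conj_eq, Ry_eq, Rz, Rz]
  rw [Matrix.mul_fin_two, Matrix.mul_fin_two, Matrix.mul_fin_two]
  congr 1 <;> ring

lemma degL1 {A P : ℂ[X]} {n : WithBot ℕ} (hA : A.degree ≤ 2) (hP : P.degree ≤ n) :
    (A * P).degree ≤ n + 2 := by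
  calc (A * P).degree ≤ A.degree + P.degree := degree_mul_le _ _
    _ ≤ 2 + n := add_le_add hA hP
    _ = n + 2 := add_comm _ _

lemma degL2 {u : ℂ} {W R : ℂ[X]} {n : WithBot ℕ} (hW : W.degree ≤ 4) (hR : R.degree + 2 ≤ n) :
    (C u * W * R).degree ≤ n + 2 := by
  have h4 : (4 : WithBot ℕ) = 2 + 2 := by norm_cast
  calc (C u * W * R).degree ≤ (C u * W).degree + R.degree := degree_mul_le _ _
    _ ≤ ((C u).degree + W.degree) + R.degree := add_le_add_left (degree_mul_le _ _) _
    _ ≤ (0 + 4) + R.degree := add_le_add_left (add_le_add degree_C_le hW) _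
    _ = (R.degree + 2) + 2 := by rw [zero_add, h4, add_comm, add_assoc]
    _ ≤ n + 2 := add_le_add_left hR _

lemma degL3 {A Q : ℂ[X]} {n : WithBot ℕ} (hA : A.degree ≤ 2) (hQ : Q.degree + 2 ≤ n) :
    (A * Q).degree + 2 ≤ n + 2 := by
  calc (A * Q).degree + 2 ≤ (A.degree + Q.degree) + 2 := add_le_add_left (degree_mul_le _ _) _
    _ = (Q.degree + 2) + A.degree := by rw [add_comm A.degree, add_assoc, add_comm A.degree,
        ← add_assoc]
    _ ≤ n + 2 := add_le_add hQ hA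

lemma degL4 {u : ℂ} {S : ℂ[X]} {n : WithBot ℕ} (hS : S.degree ≤ n) :
    (C u * S).degree + 2 ≤ n + 2 := by
  calc (C u * S).degree + 2 ≤ ((C u).degree + S.degree) + 2 :=
        add_le_add_left (degree_mul_le _ _) _
    _ ≤ (0 + n) + 2 := add_le_add_left (add_le_add degree_C_le hS) _
    _ = n + 2 := by rw [zero_add]

lemma qsp_inv (β α : ℕ → ℝ) (d : ℕ) :
    ∃ P Q R S : Polynomial ℂ,
      P.degree ≤ (2*d : ℕ) ∧ Q.degree + 2 ≤ (2*d : ℕ) ∧ R.degree + 2 ≤ (2*d : ℕ) ∧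
      S.degree ≤ (2*d : ℕ) ∧
      ∀ θ : ℝ,
        (qspProd (fun r => (Ry θ)ᴴ * Rz (α r) * Ry θ * Rz (β r)) d) 0 0
            = P.eval (Real.cos (θ/2) : ℂ) ∧
        (qspProd (fun r => (Ry θ)ᴴ * Rz (α r) * Ry θ * Rz (β r)) d) 0 1
            = (Real.sin (θ/2):ℂ) * (Real.cos (θ/2):ℂ) * Q.eval (Real.cos (θ/2) : ℂ) ∧
        (qspProd (fun r => (Ry θ)ᴴ * Rz (α r) * Ry θ * Rz (β r)) d) 1 0
            = (Real.sin (θ/2):ℂ) * (Real.cos (θ/2):ℂ) * R.eval (Real.cos (θ/2) : ℂ) ∧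
        (qspProd (fun r => (Ry θ)ᴴ * Rz (α r) * Ry θ * Rz (β r)) d) 1 1
            = S.eval (Real.cos (θ/2) : ℂ) := by
  induction d with
  | zero =>
      refine ⟨1, 0, 0, 1, ?_, ?_, ?_, ?_, ?_⟩
      · simpa using Polynomial.degree_one_le
      · simp
      · simp
      · simpa using Polynomial.degree_one_le
      · intro θ
        simp [qspProd, Matrix.one_apply]
  | succ d ih =>
      obtain ⟨P, Q, R, S, hP, hQ, hR, hS, hθ⟩ := ih
      have hdA00 : (C (Complex.exp (-((β (d+1)):ℂ)*I) * Complex.exp (-((α (d+1)):ℂ)*I)) * X^2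
          + C (Complex.exp (-((β (d+1)):ℂ)*I) * Complex.exp (((α (d+1)):ℂ)*I)) * (1 - X^2)
          : ℂ[X]).degree ≤ 2 := by compute_degree
      have hdA11 : (C (Complex.exp (((β (d+1)):ℂ)*I) * Complex.exp (-((α (d+1)):ℂ)*I)) * (1 - X^2)
          + C (Complex.exp (((β (d+1)):ℂ)*I) * Complex.exp (((α (d+1)):ℂ)*I)) * X^2
          : ℂ[X]).degree ≤ 2 := by compute_degree
      have hdW : ((X^2 * (1 - X^2)) : ℂ[X]).degree ≤ 4 := by compute_degree
      have hcast : ((2*(d+1) : ℕ) : WithBot ℕ) = ((2*d : ℕ) : WithBot ℕ) + 2 := by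
        push_cast; ring
      refine ⟨(C (Complex.exp (-((β (d+1)):ℂ)*I) * Complex.exp (-((α (d+1)):ℂ)*I)) * X^2
          + C (Complex.exp (-((β (d+1)):ℂ)*I) * Complex.exp (((α (d+1)):ℂ)*I)) * (1 - X^2)) * P
          + C (Complex.exp (((β (d+1)):ℂ)*I)
              * (Complex.exp (((α (d+1)):ℂ)*I) - Complex.exp (-((α (d+1)):ℂ)*I)))
            * (X^2 * (1 - X^2)) * R,
        (C (Complex.exp (-((β (d+1)):ℂ)*I) * Complex.exp (-((α (d+1)):ℂ)*I)) * X^2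
          + C (Complex.exp (-((β (d+1)):ℂ)*I) * Complex.exp (((α (d+1)):ℂ)*I)) * (1 - X^2)) * Q
          + C (Complex.exp (((β (d+1)):ℂ)*I)
              * (Complex.exp (((α (d+1)):ℂ)*I) - Complex.exp (-((α (d+1)):ℂ)*I))) * S,
        C (Complex.exp (-((β (d+1)):ℂ)*I)
              * (Complex.exp (((α (d+1)):ℂ)*I) - Complex.exp (-((α (d+1)):ℂ)*I))) * P
          + (C (Complex.exp (((β (d+1)):ℂ)*I) * Complex.exp (-((α (d+1)):ℂ)*I)) * (1 - X^2)
            + C (Complex.exp (((β (d+1)):ℂ)*I) * Complex.exp (((α (d+1)):ℂ)*I)) * X^2) * R,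
        C (Complex.exp (-((β (d+1)):ℂ)*I)
              * (Complex.exp (((α (d+1)):ℂ)*I) - Complex.exp (-((α (d+1)):ℂ)*I)))
            * (X^2 * (1 - X^2)) * Q
          + (C (Complex.exp (((β (d+1)):ℂ)*I) * Complex.exp (-((α (d+1)):ℂ)*I)) * (1 - X^2)
            + C (Complex.exp (((β (d+1)):ℂ)*I) * Complex.exp (((α (d+1)):ℂ)*I)) * X^2) * S,
        ?_, ?_, ?_, ?_, ?_⟩
      · rw [hcast]
        exact le_trans (degree_add_le _ _) (max_le (degL1 hdA00 hP) (degL2 hdW hR))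
      · rw [hcast]
        refine le_trans (add_le_add_left (degree_add_le _ _) _) ?_
        rw [← max_add_add_right]
        exact max_le (degL3 hdA00 hQ) (degL4 hS)
      · rw [hcast]
        refine le_trans (add_le_add_left (degree_add_le _ _) _) ?_
        rw [← max_add_add_right]
        exact max_le (degL4 hP) (degL3 hdA11 hR)
      · rw [hcast]
        exact le_trans (degree_add_le _ _) (max_le (degL2 hdW hQ) (degL1 hdA11 hS))
      · intro θ
        obtain ⟨h00, h01, h10, h11⟩ := hθ θ
        have hs : (Real.sin (θ/2):ℂ)^2 = 1 - (Real.cos (θ/2):ℂ)^2 := by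
          exact_mod_cast Real.sin_sq (θ/2)
        refine ⟨?_, ?_, ?_, ?_⟩
        · show ((fun r => (Ry θ)ᴴ * Rz (α r) * Ry θ * Rz (β r)) (d+1) *
            qspProd (fun r => (Ry θ)ᴴ * Rz (α r) * Ry θ * Rz (β r)) d) 0 0 = _
          rw [Matrix.mul_apply, Fin.sum_univ_two]
          rw [h00, h10]
          beta_reduce
          rw [term_eq]
          simp only [Matrix.of_apply, Matrix.cons_val', Matrix.cons_val_zero, Matrix.cons_val_one,
            Matrix.head_cons, Matrix.empty_val', Matrix.cons_val_fin_one, Matrix.head_fin_const,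
            eval_add, eval_mul, eval_C, eval_pow, eval_X, eval_one, eval_sub]
          linear_combination (Complex.exp (-((β (d+1)):ℂ)*I) * Complex.exp (((α (d+1)):ℂ)*I)
              * P.eval (Real.cos (θ/2):ℂ)
            + Complex.exp (((β (d+1)):ℂ)*I)
              * (Complex.exp (((α (d+1)):ℂ)*I) - Complex.exp (-((α (d+1)):ℂ)*I))
              * (Real.cos (θ/2):ℂ)^2 * R.eval (Real.cos (θ/2):ℂ)) * hs
        · show ((fun r => (Ry θ)ᴴ * Rz (α r) * Ry θ * Rz (β r)) (d+1) *
            qspProd (fun r => (Ry θ)ᴴ * Rz (α r) * Ry θ * Rz (β r)) d) 0 1 = _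
          rw [Matrix.mul_apply, Fin.sum_univ_two]
          rw [h01, h11]
          beta_reduce
          rw [term_eq]
          simp only [Matrix.of_apply, Matrix.cons_val', Matrix.cons_val_zero, Matrix.cons_val_one,
            Matrix.head_cons, Matrix.empty_val', Matrix.cons_val_fin_one, Matrix.head_fin_const,
            eval_add, eval_mul, eval_C, eval_pow, eval_X, eval_one, eval_sub]
          linear_combination (Complex.exp (-((β (d+1)):ℂ)*I) * Complex.exp (((α (d+1)):ℂ)*I)
              * (Real.sin (θ/2):ℂ) * (Real.cos (θ/2):ℂ) * Q.eval (Real.cos (θ/2):ℂ)) * hs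
        · show ((fun r => (Ry θ)ᴴ * Rz (α r) * Ry θ * Rz (β r)) (d+1) *
            qspProd (fun r => (Ry θ)ᴴ * Rz (α r) * Ry θ * Rz (β r)) d) 1 0 = _
          rw [Matrix.mul_apply, Fin.sum_univ_two]
          rw [h00, h10]
          beta_reduce
          rw [term_eq]
          simp only [Matrix.of_apply, Matrix.cons_val', Matrix.cons_val_zero, Matrix.cons_val_one,
            Matrix.head_cons, Matrix.empty_val', Matrix.cons_val_fin_one, Matrix.head_fin_const,
            eval_add, eval_mul, eval_C, eval_pow, eval_X, eval_one, eval_sub]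
          linear_combination (Complex.exp (((β (d+1)):ℂ)*I) * Complex.exp (-((α (d+1)):ℂ)*I)
              * (Real.sin (θ/2):ℂ) * (Real.cos (θ/2):ℂ) * R.eval (Real.cos (θ/2):ℂ)) * hs
        · show ((fun r => (Ry θ)ᴴ * Rz (α r) * Ry θ * Rz (β r)) (d+1) *
            qspProd (fun r => (Ry θ)ᴴ * Rz (α r) * Ry θ * Rz (β r)) d) 1 1 = _
          rw [Matrix.mul_apply, Fin.sum_univ_two]
          rw [h01, h11]
          beta_reduce
          rw [term_eq]
          simp only [Matrix.of_apply, Matrix.cons_val', Matrix.cons_val_zero, Matrix.cons_val_one,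
            Matrix.head_cons, Matrix.empty_val', Matrix.cons_val_fin_one, Matrix.head_fin_const,
            eval_add, eval_mul, eval_C, eval_pow, eval_X, eval_one, eval_sub]
          linear_combination (Complex.exp (-((β (d+1)):ℂ)*I)
              * (Complex.exp (((α (d+1)):ℂ)*I) - Complex.exp (-((α (d+1)):ℂ)*I))
              * (Real.cos (θ/2):ℂ)^2 * Q.eval (Real.cos (θ/2):ℂ)
            + Complex.exp (((β (d+1)):ℂ)*I) * Complex.exp (-((α (d+1)):ℂ)*I)
              * S.eval (Real.cos (θ/2):ℂ)) * hs

end Aux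

/-- **QSP products implement polynomials of `cos(θ/2)`.** For any depth `d ≥ 1`
and phases `β_0, α_1, β_1, …, α_d, β_d`, there is a polynomial `P` of degree at
most `2d` with `⟨0| M(θ) |0⟩ = P(cos(θ/2))` for all `θ`, where
`M(θ) = e^{−iβ_0 Z} Π_{r=1}^d [R(θ)* e^{−iα_r Z} R(θ) e^{−iβ_r Z}]` and
`R(θ) = e^{−i(θ/2)Y}`. -/
theorem qsp_product_polynomial
    (d : ℕ) (hd : 1 ≤ d) (β : ℕ → ℝ) (α : ℕ → ℝ) :
    ∃ P : Polynomial ℂ, P.natDegree ≤ 2 * d ∧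
      ∀ θ : ℝ,
        (Rz (β 0) *
          qspProd (fun r => (Ry θ)ᴴ * Rz (α r) * Ry θ * Rz (β r)) d) 0 0
          = P.eval ((Real.cos (θ / 2) : ℂ)) := by
  obtain ⟨P, Q, R, S, hP, hQ, hR, hS, hθ⟩ := qsp_inv β α d
  refine ⟨C (Complex.exp (-((β 0):ℂ) * Complex.I)) * P, ?_, ?_⟩
  · rw [Polynomial.natDegree_le_iff_degree_le]
    calc (C (Complex.exp (-((β 0):ℂ) * Complex.I)) * P).degree
        ≤ (C (Complex.exp (-((β 0):ℂ) * Complex.I))).degree + P.degree := degree_mul_le _ _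
      _ ≤ 0 + ((2*d : ℕ) : WithBot ℕ) := add_le_add degree_C_le hP
      _ = ((2*d : ℕ) : WithBot ℕ) := zero_add _
  · intro θ
    obtain ⟨h00, -, h10, -⟩ := hθ θ
    rw [Matrix.mul_apply, Fin.sum_univ_two, h00, h10, Rz]
    simp only [Matrix.of_apply, Matrix.cons_val', Matrix.cons_val_zero, Matrix.cons_val_one,
      Matrix.head_cons, Matrix.empty_val', Matrix.cons_val_fin_one, Matrix.head_fin_const,
      eval_mul, eval_C]
    ring
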